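/- Let V be a vertex algebra, W a V-module, and let u ∈ E_r(V), w ∈ E_s(W) with r,s ∈ ℤ. Then u_n w ∈ E_{r+s-n-1}(W) for all n ∈ ℤ, and furthermore u_n w ∈ E_{r+s-n}(W) for all n ≥ 0. -/
import Mathlib


open scoped DirectSum

noncomputable section


/-- Integer binomial coefficient `C(m, i)` for `m : ℤ`, `i : ℕ`. -/
def intBinom (m : ℤ) (i : ℕ) : ℤ :=
  (∏ j ∈ Finset.range i, (m - (j : ℤ))) / (i.factorial : ℤ)

/-- A vertex algebra over `ℂ`: a complex vector space `V` with a vacuum vector and a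
linear state-field correspondence `Y`, `Y(v,x) = ∑ₙ vₙ x^{-n-1}`, satisfying
truncation, vacuum and creation properties, and Borcherds' commutator and
iterate formulas. -/
structure VertexAlgebra (V : Type*) [AddCommGroup V] [Module ℂ V] where
  /-- the coefficients of vertex operators: `Y u n v = uₙ v`. -/
  Y : V →ₗ[ℂ] ℤ → Module.End ℂ V
  /-- the vacuum vector `𝟏`. -/
  vac : V
  trunc : ∀ u v : V, ∃ N : ℕ, ∀ n : ℤ, (N : ℤ) ≤ n → Y u n v = 0
  vac_act : ∀ (n : ℤ) (v : V), Y vac n v = if n = -1 then v else 0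
  create : ∀ u : V, Y u (-1) vac = u
  create_nonneg : ∀ (u : V) (n : ℤ), 0 ≤ n → Y u n vac = 0
  commutator : ∀ (u v w : V) (m n : ℤ),
    Y u m (Y v n w) - Y v n (Y u m w)
      = ∑ᶠ i : ℕ, intBinom m i • Y (Y u i v) (m + n - i) w
  iterate : ∀ (u v w : V) (m n : ℤ),
    Y (Y u m v) n w
      = ∑ᶠ i : ℕ, ((-1 : ℤ) ^ i * intBinom m i) •
          (Y u (m - i) (Y v (n + i) w)
            - ((((-1 : ℤˣ) ^ m : ℤˣ) : ℤ) • Y v (m + n - i) (Y u i w)))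

/-- A module for a vertex algebra. -/
structure VAModule {V : Type*} [AddCommGroup V] [Module ℂ V] (va : VertexAlgebra V)
    (W : Type*) [AddCommGroup W] [Module ℂ W] where
  /-- the action `act v n w = vₙ w`. -/
  act : V →ₗ[ℂ] ℤ → Module.End ℂ W
  trunc : ∀ (v : V) (w : W), ∃ N : ℕ, ∀ n : ℤ, (N : ℤ) ≤ n → act v n w = 0
  vac_act : ∀ (n : ℤ) (w : W), act va.vac n w = if n = -1 then w else 0
  commutator : ∀ (u v : V) (w : W) (m n : ℤ),
    act u m (act v n w) - act v n (act u m w)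
      = ∑ᶠ i : ℕ, intBinom m i • act (va.Y u i v) (m + n - i) w
  iterate : ∀ (u v : V) (w : W) (m n : ℤ),
    act (va.Y u m v) n w
      = ∑ᶠ i : ℕ, ((-1 : ℤ) ^ i * intBinom m i) •
          (act u (m - i) (act v (n + i) w)
            - ((((-1 : ℤˣ) ^ m : ℤˣ) : ℤ) • act v (m + n - i) (act u i w)))

variable {V : Type*} [AddCommGroup V] [Module ℂ V]

/-- The adjoint module of a vertex algebra. -/
def VertexAlgebra.adjoint (va : VertexAlgebra V) : VAModule va V where
  act := va.Y
  trunc := va.trunc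
  vac_act := va.vac_act
  commutator := va.commutator
  iterate := va.iterate

variable {W : Type*} [AddCommGroup W] [Module ℂ W]

/-- `Efilt M n = E_n(W)`: the subspace of `W` spanned by the vectors
`u⁽¹⁾_{-1-k₁} ⋯ u⁽ʳ⁾_{-1-k_r} w` for `r ≥ 1`, `u⁽ⁱ⁾ ∈ V`, `w ∈ W`, `kᵢ ≥ 0`,
`k₁ + ⋯ + k_r ≥ n`. -/
def Efilt {va : VertexAlgebra V} (M : VAModule va W) (n : ℤ) : Submodule ℂ W :=
  Submodule.span ℂ {x : W | ∃ (L : List (V × ℕ)) (w : W), L ≠ [] ∧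
    n ≤ (L.map fun p => ((p.2 : ℤ))).sum ∧
    x = L.foldr (fun p acc => M.act p.1 (-1 - (p.2 : ℤ)) acc) w}

/-- `Cfilt M n = C_n(W)`: the subspace of `W` spanned by the vectors `v_{-n} w`. -/
def Cfilt {va : VertexAlgebra V} (M : VAModule va W) (n : ℕ) : Submodule ℂ W :=
  Submodule.span ℂ {x : W | ∃ (v : V) (w : W), x = M.act v (-(n : ℤ)) w}


section EfiltLemmas

variable {va : VertexAlgebra V} (M : VAModule va W)

lemma efilt_mono {m n : ℤ} (h : m ≤ n) : Efilt M n ≤ Efilt M m := by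
  apply Submodule.span_mono
  rintro x ⟨L, w, hL, hs, rfl⟩
  exact ⟨L, w, hL, le_trans h hs, rfl⟩

lemma efilt_top {n : ℤ} (hn : n ≤ 0) (w : W) : w ∈ Efilt M n := by
  apply Submodule.subset_span
  refine ⟨[(va.vac, 0)], w, by simp, by simpa using hn, ?_⟩
  simp [M.vac_act]

lemma efilt_prepend (a : V) (k : ℕ) {t : ℤ} {y : W} (hy : y ∈ Efilt M t) :
    M.act a (-1 - (k : ℤ)) y ∈ Efilt M (t + k) := by
  have h : Efilt M t ≤ (Efilt M (t + k)).comap (M.act a (-1 - (k : ℤ))) := by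
    rw [Efilt, Submodule.span_le]
    rintro x ⟨L, w, hL, hs, rfl⟩
    simp only [SetLike.mem_coe, Submodule.mem_comap]
    refine Submodule.subset_span ⟨(a, k) :: L, w, by simp, ?_, rfl⟩
    simp only [List.map_cons, List.sum_cons]
    omega
  exact h hy

lemma finsum_mem_submodule {f : ℕ → W} (N : ℕ) (hf : ∀ i, N ≤ i → f i = 0)
    (p : Submodule ℂ W) (hp : ∀ i, f i ∈ p) : (∑ᶠ i, f i) ∈ p := by
  have hsupp : Function.support f ⊆ ↑(Finset.range N) := by
    intro i hi
    simp only [Finset.coe_range, Set.mem_Iio]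
    by_contra h
    exact hi (hf i (le_of_not_gt h))
  rw [finsum_eq_sum_of_support_subset f hsupp]
  exact Submodule.sum_mem p fun i _ => hp i

lemma coreA (L : List (V × ℕ)) (w0 : W) :
    ∀ (a : V) (n : ℤ),
      (M.act a n (L.foldr (fun p acc => M.act p.1 (-1 - (p.2 : ℤ)) acc) w0)
        ∈ Efilt M ((L.map fun p => ((p.2 : ℤ))).sum - n - 1)) ∧
      (0 ≤ n → M.act a n (L.foldr (fun p acc => M.act p.1 (-1 - (p.2 : ℤ)) acc) w0)
        ∈ Efilt M ((L.map fun p => ((p.2 : ℤ))).sum - n)) := by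
  induction L with
  | nil =>
    intro a n
    simp only [List.map_nil, List.sum_nil, List.foldr_nil]
    constructor
    · rcases le_or_gt 0 n with h | h
      · exact efilt_top M (by omega) _
      · apply Submodule.subset_span
        refine ⟨[(a, (-1 - n).toNat)], w0, by simp, ?_, ?_⟩
        · simp only [List.map_cons, List.map_nil, List.sum_cons, List.sum_nil]
          omega
        · simp only [List.foldr_cons, List.foldr_nil]
          have he : (-1 : ℤ) - (((-1 - n).toNat : ℕ) : ℤ) = n := by omega
          rw [he]
    · intro hn
      exact efilt_top M (by omega) _
  | cons p L' ih =>
    obtain ⟨b, k⟩ := p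
    intro a n
    simp only [List.foldr_cons, List.map_cons, List.sum_cons]
    have hx : M.act a n (M.act b (-1 - (k : ℤ)) (L'.foldr (fun p acc => M.act p.1 (-1 - (p.2 : ℤ)) acc) w0)) =
        M.act b (-1 - (k : ℤ)) (M.act a n (L'.foldr (fun p acc => M.act p.1 (-1 - (p.2 : ℤ)) acc) w0))
          + ∑ᶠ i : ℕ, intBinom n i • M.act (va.Y a i b) (n + (-1 - (k : ℤ)) - i)
              (L'.foldr (fun p acc => M.act p.1 (-1 - (p.2 : ℤ)) acc) w0) :=
      sub_eq_iff_eq_add'.mp (M.commutator a b _ n (-1 - (k : ℤ)))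
    obtain ⟨N, hN⟩ := va.trunc a b
    have hzero : ∀ i : ℕ, N ≤ i →
        intBinom n i • M.act (va.Y a i b) (n + (-1 - (k : ℤ)) - i)
          (L'.foldr (fun p acc => M.act p.1 (-1 - (p.2 : ℤ)) acc) w0) = 0 := by
      intro i hi
      rw [hN i (by exact_mod_cast hi)]
      simp
    constructor
    · rw [hx]
      apply add_mem
      · have h1 := efilt_prepend M b k ((ih a n).1)
        exact efilt_mono M (by omega) h1
      · apply finsum_mem_submodule N hzero _
        intro i
        refine zsmul_mem ?_ _
        exact efilt_mono M (by omega) ((ih (va.Y a i b) (n + (-1 - (k : ℤ)) - i)).1)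
    · intro hn
      rw [hx]
      apply add_mem
      · have h1 := efilt_prepend M b k ((ih a n).2 hn)
        exact efilt_mono M (by omega) h1
      · apply finsum_mem_submodule N hzero _
        intro i
        refine zsmul_mem ?_ _
        exact efilt_mono M (by omega) ((ih (va.Y a i b) (n + (-1 - (k : ℤ)) - i)).1)

lemma lemmaA (a : V) {s : ℤ} {w : W} (hw : w ∈ Efilt M s) :
    (∀ n : ℤ, M.act a n w ∈ Efilt M (s - n - 1)) ∧
    (∀ n : ℤ, 0 ≤ n → M.act a n w ∈ Efilt M (s - n)) := by
  constructor
  · intro n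
    have h : Efilt M s ≤ (Efilt M (s - n - 1)).comap (M.act a n) := by
      rw [Efilt, Submodule.span_le]
      rintro x ⟨L, w0, hL, hs, rfl⟩
      simp only [SetLike.mem_coe, Submodule.mem_comap]
      exact efilt_mono M (by omega) (coreA M L w0 a n).1
    exact h hw
  · intro n hn
    have h : Efilt M s ≤ (Efilt M (s - n)).comap (M.act a n) := by
      rw [Efilt, Submodule.span_le]
      rintro x ⟨L, w0, hL, hs, rfl⟩
      simp only [SetLike.mem_coe, Submodule.mem_comap]
      exact efilt_mono M (by omega) ((coreA M L w0 a n).2 hn)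
    exact h hw

lemma coreB (L : List (V × ℕ)) (v0 : V) :
    ∀ (s : ℤ) (w : W), w ∈ Efilt M s → ∀ n : ℤ,
      (M.act (L.foldr (fun p acc => va.Y p.1 (-1 - (p.2 : ℤ)) acc) v0) n w
        ∈ Efilt M ((L.map fun p => ((p.2 : ℤ))).sum + s - n - 1)) ∧
      (0 ≤ n → M.act (L.foldr (fun p acc => va.Y p.1 (-1 - (p.2 : ℤ)) acc) v0) n w
        ∈ Efilt M ((L.map fun p => ((p.2 : ℤ))).sum + s - n)) := by
  induction L with
  | nil =>
    intro s w hw n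
    simp only [List.map_nil, List.sum_nil, List.foldr_nil, zero_add]
    exact ⟨(lemmaA M v0 hw).1 n, fun hn => (lemmaA M v0 hw).2 n hn⟩
  | cons p L' ih =>
    obtain ⟨a, k⟩ := p
    intro s w hw n
    simp only [List.foldr_cons, List.map_cons, List.sum_cons]
    set u' := L'.foldr (fun p acc => va.Y p.1 (-1 - (p.2 : ℤ)) acc) v0 with hu'
    have hiter := M.iterate a u' w (-1 - (k : ℤ)) n
    obtain ⟨N1, hN1⟩ := M.trunc u' w
    obtain ⟨N2, hN2⟩ := M.trunc a w
    set N := max ((N1 : ℤ) - n).toNat N2 with hNdef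
    have hzero : ∀ i : ℕ, N ≤ i →
        ((-1 : ℤ) ^ i * intBinom (-1 - (k : ℤ)) i) •
          (M.act a ((-1 - (k : ℤ)) - i) (M.act u' (n + i) w)
            - ((((-1 : ℤˣ) ^ ((-1 - (k : ℤ))) : ℤˣ) : ℤ) •
                M.act u' ((-1 - (k : ℤ)) + n - i) (M.act a i w))) = 0 := by
      intro i hi
      have h1 : ((N1 : ℤ) - n).toNat ≤ i := le_trans (le_max_left _ _) hi
      have h2 : N2 ≤ i := le_trans (le_max_right _ _) hi
      have e1 : M.act u' (n + i) w = 0 := hN1 _ (by omega)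
      have e2 : M.act a i w = 0 := hN2 _ (by exact_mod_cast h2)
      rw [e1, e2]
      simp
    have hmemA : ∀ i : ℕ,
        M.act a ((-1 - (k : ℤ)) - i) (M.act u' (n + i) w)
          ∈ Efilt M ((k : ℤ) + (L'.map fun p => ((p.2 : ℤ))).sum + s - n - 1) := by
      intro i
      have hidx : ((-1 : ℤ) - (k : ℤ)) - i = -1 - (((k + i : ℕ) : ℤ)) := by push_cast; ring
      rw [hidx]
      have h1 := (ih s w hw (n + i)).1
      have h2 := efilt_prepend M a (k + i) h1
      exact efilt_mono M (by push_cast; omega) h2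
    have hmemA2 : 0 ≤ n → ∀ i : ℕ,
        M.act a ((-1 - (k : ℤ)) - i) (M.act u' (n + i) w)
          ∈ Efilt M ((k : ℤ) + (L'.map fun p => ((p.2 : ℤ))).sum + s - n) := by
      intro hn i
      have hidx : ((-1 : ℤ) - (k : ℤ)) - i = -1 - (((k + i : ℕ) : ℤ)) := by push_cast; ring
      rw [hidx]
      have h1 := (ih s w hw (n + i)).2 (by omega)
      have h2 := efilt_prepend M a (k + i) h1
      exact efilt_mono M (by push_cast; omega) h2
    have hmemB : ∀ i : ℕ,
        M.act u' ((-1 - (k : ℤ)) + n - i) (M.act a i w)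
          ∈ Efilt M ((k : ℤ) + (L'.map fun p => ((p.2 : ℤ))).sum + s - n) := by
      intro i
      have h1 : M.act a i w ∈ Efilt M (s - i) := (lemmaA M a hw).2 i (by positivity)
      have h2 := (ih (s - i) (M.act a i w) h1 ((-1 - (k : ℤ)) + n - i)).1
      exact efilt_mono M (by omega) h2
    constructor
    · rw [hiter]
      apply finsum_mem_submodule N hzero _
      intro i
      refine zsmul_mem (sub_mem (hmemA i) (zsmul_mem ?_ _)) _
      exact efilt_mono M (by omega) (hmemB i)
    · intro hn
      rw [hiter]
      apply finsum_mem_submodule N hzero _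
      intro i
      exact zsmul_mem (sub_mem (hmemA2 hn i) (zsmul_mem (hmemB i) _)) _

/-- Evaluation `u ↦ u_n w` as a linear map. -/
def evalAct (n : ℤ) (w : W) : V →ₗ[ℂ] W where
  toFun u := M.act u n w
  map_add' u v := by simp
  map_smul' c u := by simp

end EfiltLemmas

/-- **Proposition 2.12 (pbasic2).** Let `V` be a vertex algebra, `W` a `V`-module,
`u ∈ E_r(V)`, `w ∈ E_s(W)` with `r, s ∈ ℤ`. Then `u_n w ∈ E_{r+s-n-1}(W)` for all
`n ∈ ℤ`, and furthermore `u_n w ∈ E_{r+s-n}(W)` for all `n ≥ 0`. -/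
theorem stmt3 {V : Type*} [AddCommGroup V] [Module ℂ V] {W : Type*} [AddCommGroup W]
    [Module ℂ W] (va : VertexAlgebra V) (M : VAModule va W) (r s : ℤ) (u : V) (w : W)
    (hu : u ∈ Efilt va.adjoint r) (hw : w ∈ Efilt M s) :
    (∀ n : ℤ, M.act u n w ∈ Efilt M (r + s - n - 1)) ∧
    (∀ n : ℤ, 0 ≤ n → M.act u n w ∈ Efilt M (r + s - n)) := by
  have key : ∀ n : ℤ,
      (M.act u n w ∈ Efilt M (r + s - n - 1)) ∧
      (0 ≤ n → M.act u n w ∈ Efilt M (r + s - n)) := by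
    intro n
    constructor
    · have h : Efilt va.adjoint r ≤ (Efilt M (r + s - n - 1)).comap (evalAct M n w) := by
        rw [Efilt, Submodule.span_le]
        rintro x ⟨L, v0, hL, hr, rfl⟩
        simp only [SetLike.mem_coe, Submodule.mem_comap]
        have := (coreB M L v0 s w hw n).1
        exact efilt_mono M (by omega) this
      exact h hu
    · intro hn
      have h : Efilt va.adjoint r ≤ (Efilt M (r + s - n)).comap (evalAct M n w) := by
        rw [Efilt, Submodule.span_le]
        rintro x ⟨L, v0, hL, hr, rfl⟩
        simp only [SetLike.mem_coe, Submodule.mem_comap]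
        have := (coreB M L v0 s w hw n).2 hn
        exact efilt_mono M (by omega) this
      exact h hu
  exact ⟨fun n => (key n).1, fun n hn => (key n).2 hn⟩


end
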